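/- arXiv:2509.17706 — 4 statements merged into one kernel-verified Lean document; each statement's English description precedes it below -/
import Mathlib

section
/- Conflict detection correctness in Bool_θ(P): suppose there exists a dual-feasible solution for the constraint's LP with unary costs removed, i.e., y_cc ≥ 0 and reals (y_i)_{i∈S} with w_{iv}·y_cc + y_i ≤ δ_{iv} for all i ∈ S, v ∈ D_i, whose dual objective satisfies C·y_cc + Σ_{i∈S} y_i − δ_∅ ≥ θ. Then every tuple τ ∈ Π_{i∈S} D_i satisfying the constraint Σ_{i∈S} w_{iτ[i]} ≥ C has cost Σ_{i∈S} δ_{iτ[i]} − δ_∅ ≥ θ; that is, the constraint is conflicting in Bool_θ(P). -/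
/-- Conflict detection correctness in Bool_θ(P): a dual-feasible solution
(for the LP with unary costs removed) with dual objective at least θ certifies that every
tuple satisfying the linear constraint has cost at least θ. -/
theorem boolP_conflict_detection
    {ι : Type*} [Fintype ι] [Nonempty ι]
    (D : ι → Type*) [∀ i, Fintype (D i)] [∀ i, Nonempty (D i)]
    (w : ∀ i, D i → ℝ) (hw : ∀ i (v : D i), 0 ≤ w i v) (C : ℝ)
    (δ : ∀ i, D i → ℝ) (δ0 : ℝ) (θ : ℝ) (hθ : 0 < θ)
    (ycc : ℝ) (y : ι → ℝ)
    (hycc : 0 ≤ ycc)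
    (hdual : ∀ i (v : D i), w i v * ycc + y i ≤ δ i v)
    (hobj : θ ≤ C * ycc + (∑ i, y i) - δ0) :
    ∀ τ : ∀ i, D i, C ≤ ∑ i, w i (τ i) → θ ≤ (∑ i, δ i (τ i)) - δ0 := by
  intro τ hτ
  have h1 : C * ycc ≤ (∑ i, w i (τ i)) * ycc := mul_le_mul_of_nonneg_right hτ hycc
  have h2 : ∑ i, (w i (τ i) * ycc + y i) ≤ ∑ i, δ i (τ i) :=
    Finset.sum_le_sum fun i _ => hdual i (τ i)
  calc θ ≤ C * ycc + (∑ i, y i) - δ0 := hobj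
    _ ≤ (∑ i, w i (τ i)) * ycc + (∑ i, y i) - δ0 := by linarith
    _ = (∑ i, (w i (τ i) * ycc + y i)) - δ0 := by
        rw [Finset.sum_add_distrib, Finset.sum_mul]
    _ ≤ (∑ i, δ i (τ i)) - δ0 := by linarith
end

section
/- Soft value-removal (reduced cost filtering) correctness: let y_cc ≥ 0 and reals (y_j)_{j∈S} satisfy w_{jv}·y_cc + y_j ≤ δ_{jv} for all j ∈ S, v ∈ D_j, let d = C·y_cc + Σ_{j∈S} y_j − δ_∅ be the dual objective, and for an assignment (i,v) let rc(i,v) = δ_{iv} − w_{iv}·y_cc − y_i. Then every tuple τ ∈ Π_{j∈S} D_j with τ[i] = v and Σ_{j∈S} w_{jτ[j]} ≥ C has cost Σ_{j∈S} δ_{jτ[j]} − δ_∅ ≥ d + rc(i,v). In particular, if d + rc(i,v) ≥ θ, then value (i,v) belongs to no tuple of cost less than θ satisfying the constraint, so (i,v) can be removed from Bool_θ(P). -/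
/-- Soft value-removal (reduced cost filtering) correctness: every tuple
assigning `v` to `i` and satisfying the constraint has cost at least `d + rc(i,v)`;
in particular if `d + rc(i,v) ≥ θ` then `(i,v)` belongs to no satisfying tuple of cost
less than `θ`, so it can be removed from Bool_θ(P). -/
theorem soft_removal_reduced_cost_filtering
    {ι : Type*} [Fintype ι] [Nonempty ι]
    (D : ι → Type*) [∀ j, Fintype (D j)] [∀ j, Nonempty (D j)]
    (w : ∀ j, D j → ℝ) (hw : ∀ j (v : D j), 0 ≤ w j v) (C : ℝ)
    (δ : ∀ j, D j → ℝ) (δ0 : ℝ) (θ : ℝ) (hθ : 0 < θ)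
    (ycc : ℝ) (y : ι → ℝ)
    (hycc : 0 ≤ ycc)
    (hdual : ∀ j (v : D j), w j v * ycc + y j ≤ δ j v)
    (d : ℝ) (hd : d = C * ycc + (∑ j, y j) - δ0)
    (i : ι) (v : D i)
    (rc : ℝ) (hrc : rc = δ i v - w i v * ycc - y i) :
    (∀ τ : ∀ j, D j, τ i = v → C ≤ ∑ j, w j (τ j) →
      d + rc ≤ (∑ j, δ j (τ j)) - δ0) ∧
    (θ ≤ d + rc → ∀ τ : ∀ j, D j, τ i = v → C ≤ ∑ j, w j (τ j) →
      θ ≤ (∑ j, δ j (τ j)) - δ0) := by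
  have main : ∀ τ : ∀ j, D j, τ i = v → C ≤ ∑ j, w j (τ j) →
      d + rc ≤ (∑ j, δ j (τ j)) - δ0 := by
    intro τ hτi hC
    subst hd hrc hτi
    have h1 : C * ycc ≤ (∑ j, w j (τ j)) * ycc :=
      mul_le_mul_of_nonneg_right hC hycc
    have h2 : (δ i (τ i) - (w i (τ i) * ycc + y i)) ≤
        ∑ j, (δ j (τ j) - (w j (τ j) * ycc + y j)) :=
      Finset.single_le_sum (fun j _ => sub_nonneg.2 (hdual j (τ j))) (Finset.mem_univ i)
    have h3 : ∑ j, (δ j (τ j) - (w j (τ j) * ycc + y j)) =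
        (∑ j, δ j (τ j)) - ((∑ j, w j (τ j)) * ycc + ∑ j, y j) := by
      rw [Finset.sum_sub_distrib, Finset.sum_add_distrib, Finset.sum_mul]
    linarith
  exact ⟨main, fun hθd τ h1 h2 => le_trans hθd (main τ h1 h2)⟩
end

section
/- Explanation pruning by nonnegative reduced cost: let Q be a set of 'removed' assignments (k,v) with k ∈ S, v ∈ D_k, let (i,a) be an assignment with (i,a) ∉ Q, and let (j,b) ∈ Q with j ≠ i. Suppose y_cc ≥ 0 and reals (y_k)_{k∈S} satisfy: w_{ia}·y_cc + y_i ≤ δ_{ia}; w_{kv}·y_cc + y_k ≤ δ_{kv} for every k ∈ S with k ≠ i and every v ∈ D_k with (k,v) ∉ Q; and additionally w_{jb}·y_cc + y_j ≤ δ_{jb} (i.e., the reduced cost of (j,b) is nonnegative). If C·y_cc + Σ_{k∈S} y_k − δ_∅ ≥ θ, then every tuple τ ∈ Π_{k∈S} D_k with τ[i] = a, with (k,τ[k]) ∉ Q \ {(j,b)} for all k, and with Σ_{k∈S} w_{kτ[k]} ≥ C has cost Σ_{k∈S} δ_{kτ[k]} − δ_∅ ≥ θ. Hence (j,b) is not needed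 in the explanation of the removal of (i,a): the removal of the values in Q \ {(j,b)} already implies that (i,a) has no satisfying tuple of cost less than θ. -/
/-- Explanation pruning by nonnegative reduced cost: if the dual
constraint of a removed value `(j,b)` also holds (its reduced cost is nonnegative),
then `(j,b)` is not needed in the explanation of the removal of `(i,a)`: every
satisfying tuple assigning `a` to `i` and avoiding `Q \ {(j,b)}` has cost ≥ θ. -/
theorem explanation_pruning
    {ι : Type*} [Fintype ι] [Nonempty ι]
    (D : ι → Type*) [∀ k, Fintype (D k)] [∀ k, Nonempty (D k)]
    (w : ∀ k, D k → ℝ) (hw : ∀ k (v : D k), 0 ≤ w k v) (C : ℝ)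
    (δ : ∀ k, D k → ℝ) (δ0 : ℝ) (θ : ℝ) (hθ : 0 < θ)
    (Q : Set ((k : ι) × D k))
    (i : ι) (a : D i) (hia : (⟨i, a⟩ : (k : ι) × D k) ∉ Q)
    (j : ι) (b : D j) (hji : j ≠ i) (hjb : (⟨j, b⟩ : (k : ι) × D k) ∈ Q)
    (ycc : ℝ) (y : ι → ℝ)
    (hycc : 0 ≤ ycc)
    (hia' : w i a * ycc + y i ≤ δ i a)
    (hQ : ∀ k, k ≠ i → ∀ v : D k,
      (⟨k, v⟩ : (k : ι) × D k) ∉ Q → w k v * ycc + y k ≤ δ k v)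
    (hjb' : w j b * ycc + y j ≤ δ j b)
    (hobj : θ ≤ C * ycc + (∑ k, y k) - δ0) :
    ∀ τ : ∀ k, D k, τ i = a →
      (∀ k, (⟨k, τ k⟩ : (k : ι) × D k) ∉ Q \ {(⟨j, b⟩ : (k : ι) × D k)}) →
      C ≤ ∑ k, w k (τ k) →
      θ ≤ (∑ k, δ k (τ k)) - δ0 := by
  intro τ hτi hτQ hsat
  have key : ∀ k, w k (τ k) * ycc + y k ≤ δ k (τ k) := by
    intro k
    by_cases hk : k = i
    · subst hk; rw [hτi]; exact hia'
    · by_cases hkQ : (⟨k, τ k⟩ : (k : ι) × D k) ∈ Q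
      · have := hτQ k
        have heq : (⟨k, τ k⟩ : (k : ι) × D k) = ⟨j, b⟩ := by
          by_contra h
          exact this ⟨hkQ, h⟩
        obtain ⟨hkj, hvb⟩ := Sigma.mk.inj_iff.mp heq
        subst hkj
        rw [eq_of_heq hvb]
        exact hjb'
      · exact hQ k hk (τ k) hkQ
  have hsum : (∑ k, w k (τ k)) * ycc + ∑ k, y k ≤ ∑ k, δ k (τ k) := by
    rw [Finset.sum_mul]
    calc ∑ k, w k (τ k) * ycc + ∑ k, y k = ∑ k, (w k (τ k) * ycc + y k) := by
          rw [Finset.sum_add_distrib]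
      _ ≤ ∑ k, δ k (τ k) := Finset.sum_le_sum fun k _ => key k
  have hC : C * ycc ≤ (∑ k, w k (τ k)) * ycc := mul_le_mul_of_nonneg_right hsat hycc
  linarith
end

section
/- Validity of the reparameterization from a dual-feasible solution: let y_cc ≥ 0 and (y_i)_{i∈S} be reals with w_{iv}·y_cc + y_i ≤ δ_{iv} + c_i(v) for all i ∈ S, v ∈ D_i (dual feasibility), let z = C·y_cc + Σ_{i∈S} y_i − δ_∅, and define c'_i(v) = δ_{iv} + c_i(v) − w_{iv}·y_cc − y_i, δ'_{iv} = w_{iv}·y_cc + y_i, and δ'_∅ = δ_∅ + z. Then (a) c'_i(v) ≥ 0 for every i ∈ S and v ∈ D_i, and (b) for every tuple τ with Σ_{i∈S} w_{iτ[i]} ≥ C, the new constraint cost satisfies Σ_{i∈S} δ'_{iτ[i]} − δ'_∅ = y_cc·(Σ_{i∈S} w_{iτ[i]} − C) ≥ 0. Hence the reparameterized problem has no negative costs and its constant cost c_∅ may be increased by z. -/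
/-- Validity of the reparameterization from a dual-feasible solution:
(a) the new unary costs are nonnegative, and (b) the new constraint cost of every
satisfying tuple equals `y_cc·(Σ w − C)` and is nonnegative. Hence no negative costs
are introduced and c_∅ may be increased by `z`. -/
theorem reparameterization_validity
    {ι : Type*} [Fintype ι] [Nonempty ι]
    (D : ι → Type*) [∀ i, Fintype (D i)] [∀ i, Nonempty (D i)]
    (w : ∀ i, D i → ℝ) (hw : ∀ i (v : D i), 0 ≤ w i v) (C : ℝ)
    (δ : ∀ i, D i → ℝ) (δ0 : ℝ)
    (c : ∀ i, D i → ℝ) (hc : ∀ i (v : D i), 0 ≤ c i v)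
    (ycc : ℝ) (y : ι → ℝ)
    (hycc : 0 ≤ ycc)
    (hdual : ∀ i (v : D i), w i v * ycc + y i ≤ δ i v + c i v)
    (z : ℝ) (hz : z = C * ycc + (∑ i, y i) - δ0)
    (c' : ∀ i, D i → ℝ)
    (hc' : ∀ i (v : D i), c' i v = δ i v + c i v - w i v * ycc - y i)
    (δ' : ∀ i, D i → ℝ)
    (hδ' : ∀ i (v : D i), δ' i v = w i v * ycc + y i)
    (δ0' : ℝ) (hδ0' : δ0' = δ0 + z) :
    (∀ i (v : D i), 0 ≤ c' i v) ∧
    (∀ τ : ∀ i, D i, C ≤ ∑ i, w i (τ i) →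
      (∑ i, δ' i (τ i)) - δ0' = ycc * ((∑ i, w i (τ i)) - C) ∧
      0 ≤ (∑ i, δ' i (τ i)) - δ0') := by
  constructor
  · intro i v
    have := hdual i v
    rw [hc' i v]; linarith
  · intro τ hτ
    have hsum : (∑ i, δ' i (τ i)) = (∑ i, w i (τ i) * ycc) + ∑ i, y i := by
      rw [← Finset.sum_add_distrib]
      exact Finset.sum_congr rfl fun i _ => hδ' i (τ i)
    have key : (∑ i, δ' i (τ i)) - δ0' = ycc * ((∑ i, w i (τ i)) - C) := by
      rw [hsum, hδ0', hz, ← Finset.sum_mul]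
      ring
    refine ⟨key, key ▸ mul_nonneg hycc (by linarith)⟩
end
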